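/- Let (a_n)_{n∈ℕ} and (b_n)_{n∈ℕ} be sequences of real numbers with limsup_n (a_n + b_n) ≤ 0. Assume that for every subsequence (n_ℓ)_{ℓ∈ℕ}: if limsup_ℓ a_{n_ℓ} ≤ 0 then liminf_ℓ a_{n_ℓ} ≥ 0, and if limsup_ℓ b_{n_ℓ} ≤ 0 then liminf_ℓ b_{n_ℓ} ≥ 0. Then limsup_n a_n ≤ 0 and limsup_n b_n ≤ 0 (and consequently a_n → 0 and b_n → 0). -/

import Mathlib

open Filter

lemma myaux (a b : ℕ → ℝ)
    (hsum : limsup (fun n => ((a n + b n : ℝ) : EReal)) atTop ≤ 0)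
    (hb : ∀ φ : ℕ → ℕ, StrictMono φ →
      limsup (fun ℓ => ((b (φ ℓ) : ℝ) : EReal)) atTop ≤ 0 →
      0 ≤ liminf (fun ℓ => ((b (φ ℓ) : ℝ) : EReal)) atTop) :
    limsup (fun n => ((a n : ℝ) : EReal)) atTop ≤ 0 := by
  by_contra h
  push_neg at h
  obtain ⟨c, hc0, hcL⟩ := EReal.lt_iff_exists_real_btwn.1 h
  have hc0' : (0:ℝ) < c := by exact_mod_cast hc0
  have hfreq : ∃ᶠ n in atTop, (c : EReal) < (a n : EReal) :=
    frequently_lt_of_lt_limsup (by isBoundedDefault) hcL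
  obtain ⟨φ, hφ, hφc⟩ := extraction_of_frequently_atTop hfreq
  -- limsup of (a+b) along φ ≤ 0
  have hmap : map φ atTop ≤ atTop := hφ.tendsto_atTop
  have hsumφ : limsup (fun ℓ => ((a (φ ℓ) + b (φ ℓ) : ℝ) : EReal)) atTop ≤ 0 := by
    have h1 := limsup_le_limsup_of_le (u := fun n => ((a n + b n : ℝ) : EReal)) hmap
    exact le_trans (le_of_eq (limsup_comp (fun n => ((a n + b n : ℝ) : EReal)) φ atTop)) (h1.trans hsum)
  -- limsup of -a along φ ≤ -c
  have hnegφ : limsup (fun ℓ => ((-(a (φ ℓ)) : ℝ) : EReal)) atTop ≤ ((-c : ℝ) : EReal) := by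
    apply limsup_le_of_le (by isBoundedDefault)
    filter_upwards with ℓ
    have := hφc ℓ
    have : c < a (φ ℓ) := by exact_mod_cast this
    exact_mod_cast (neg_le_neg this.le)
  -- hence limsup b along φ ≤ c/2 - c < 0
  have hbφ : limsup (fun ℓ => ((b (φ ℓ) : ℝ) : EReal)) atTop ≤ ((c/2 - c : ℝ) : EReal) := by
    have key := EReal.limsup_add_le_of_le (f := atTop)
      (u := fun ℓ => ((a (φ ℓ) + b (φ ℓ) : ℝ) : EReal))
      (v := fun ℓ => ((-(a (φ ℓ)) : ℝ) : EReal))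
      (a := ((c/2 : ℝ) : EReal)) (b := ((-c : ℝ) : EReal))
      (lt_of_le_of_lt hsumφ (by exact_mod_cast half_pos hc0')) hnegφ
    have heq : (fun ℓ => ((a (φ ℓ) + b (φ ℓ) : ℝ) : EReal)) + (fun ℓ => ((-(a (φ ℓ)) : ℝ) : EReal))
        = fun ℓ => ((b (φ ℓ) : ℝ) : EReal) := by
      funext ℓ; rw [Pi.add_apply, ← EReal.coe_add]; norm_cast; ring
    rw [heq] at key
    convert key using 2
    rw [← EReal.coe_add, sub_eq_add_neg]
  have hneg : ((c/2 - c : ℝ) : EReal) < 0 := by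
    exact_mod_cast (by linarith : c/2 - c < (0:ℝ))
  have h0 := hb φ hφ (hbφ.trans hneg.le)
  have := (h0.trans (liminf_le_limsup (by isBoundedDefault) (by isBoundedDefault))).trans hbφ
  exact absurd (this.trans_lt hneg) (lt_irrefl 0)

lemma mytend (a : ℕ → ℝ)
    (h1 : limsup (fun n => ((a n : ℝ) : EReal)) atTop ≤ 0)
    (h2 : 0 ≤ liminf (fun n => ((a n : ℝ) : EReal)) atTop) :
    Tendsto a atTop (nhds 0) := by
  have ht : Tendsto (fun n => ((a n : ℝ) : EReal)) atTop (nhds 0) :=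
    tendsto_of_le_liminf_of_limsup_le h2 h1
  rw [show (0 : EReal) = ((0:ℝ) : EReal) from rfl] at ht
  exact EReal.tendsto_coe.1 ht

/-- real-sequence splitting argument: Let `(aₙ)`, `(bₙ)` be real
sequences with `limsupₙ (aₙ + bₙ) ≤ 0` (in the extended reals). Assume that for every
subsequence: if `limsup_ℓ a_{n_ℓ} ≤ 0` then `liminf_ℓ a_{n_ℓ} ≥ 0`, and likewise for
`b`. Then `limsupₙ aₙ ≤ 0` and `limsupₙ bₙ ≤ 0` (and consequently `aₙ → 0` and
`bₙ → 0`). -/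
theorem stmt15 (a b : ℕ → ℝ)
    (hsum : limsup (fun n => ((a n + b n : ℝ) : EReal)) atTop ≤ 0)
    (ha : ∀ φ : ℕ → ℕ, StrictMono φ →
      limsup (fun ℓ => ((a (φ ℓ) : ℝ) : EReal)) atTop ≤ 0 →
      0 ≤ liminf (fun ℓ => ((a (φ ℓ) : ℝ) : EReal)) atTop)
    (hb : ∀ φ : ℕ → ℕ, StrictMono φ →
      limsup (fun ℓ => ((b (φ ℓ) : ℝ) : EReal)) atTop ≤ 0 →
      0 ≤ liminf (fun ℓ => ((b (φ ℓ) : ℝ) : EReal)) atTop) :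
    limsup (fun n => ((a n : ℝ) : EReal)) atTop ≤ 0 ∧
    limsup (fun n => ((b n : ℝ) : EReal)) atTop ≤ 0 ∧
    Filter.Tendsto a atTop (nhds 0) ∧ Filter.Tendsto b atTop (nhds 0) := by
  have hsum' : limsup (fun n => ((b n + a n : ℝ) : EReal)) atTop ≤ 0 := by
    simpa [add_comm] using hsum
  have hA := myaux a b hsum hb
  have hB := myaux b a hsum' ha
  have hAinf := ha id strictMono_id hA
  have hBinf := hb id strictMono_id hB
  exact ⟨hA, hB, mytend a hA hAinf, mytend b hB hBinf⟩
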